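/- Let (V̲, P̲) and (V̄, P̄) be respectively a subsolution and a supersolution of the asymptotic system (i.e. families of C¹ functions on [0,∞) indexed by j ∈ ℤ satisfying, for all t > 0 and j ∈ ℤ, V̄_j'(t) ≥ −2α V̄_j(t) + β(P̄_j(t) + P̄_{j+1}(t)) and P̄_j'(t) ≥ f(P̄_j(t)) + α(V̄_j(t) + V̄_{j-1}(t)) − 2β P̄_j(t), with reversed inequalities for the subsolution), both locally bounded in time. If V̲_j(0) ≤ V̄_j(0) and P̲_j(0) ≤ P̄_j(0) for all j ∈ ℤ, then V̲_j(t) ≤ V̄_j(t) and P̲_j(t) ≤ P̄_j(t) for all t > 0 and j ∈ ℤ. If, in addition, the initial data are not identical, then V̲_j(t) < V̄_j(t) and P̲_j(t) < P̄_j(t) for all t > 0 and j ∈ ℤ. -/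

import Mathlib

open Set Filter Topology

noncomputable section

/-- `C¹` regularity on `[0,∞)` for a pair of families of functions indexed by `ℤ`. -/
def AsympReg (V P : ℤ → ℝ → ℝ) : Prop :=
  ∀ j, ContDiffOn ℝ 1 (V j) (Ici 0) ∧ ContDiffOn ℝ 1 (P j) (Ici 0)

/-- A supersolution of the asymptotic system. -/
def AsympSuperSolution (α β : ℝ) (f : ℝ → ℝ) (V P : ℤ → ℝ → ℝ) : Prop :=
  AsympReg V P ∧
  ∀ j : ℤ, ∀ t : ℝ, 0 < t →
    -(2 * α) * V j t + β * (P j t + P (j + 1) t) ≤ deriv (V j) t ∧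
    f (P j t) + α * (V j t + V (j - 1) t) - 2 * β * P j t ≤ deriv (P j) t

/-- A subsolution of the asymptotic system. -/
def AsympSubSolution (α β : ℝ) (f : ℝ → ℝ) (V P : ℤ → ℝ → ℝ) : Prop :=
  AsympReg V P ∧
  ∀ j : ℤ, ∀ t : ℝ, 0 < t →
    deriv (V j) t ≤ -(2 * α) * V j t + β * (P j t + P (j + 1) t) ∧
    deriv (P j) t ≤ f (P j t) + α * (V j t + V (j - 1) t) - 2 * β * P j t

/-- Locally bounded in time, uniformly in `j`. -/
def AsympLocBdd (V P : ℤ → ℝ → ℝ) : Prop :=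
  ∀ T : ℝ, 0 < T → ∃ C : ℝ, ∀ j, ∀ t ∈ Icc (0:ℝ) T, |V j t| ≤ C ∧ |P j t| ≤ C

private lemma expc_hasDeriv (c σ : ℝ) :
    HasDerivAt (fun τ => Real.exp (c*τ)) (c * Real.exp (c*σ)) σ := by
  have := (Real.hasDerivAt_exp (c*σ)).comp σ ((hasDerivAt_id σ).const_mul c)
  exact this.congr_deriv (by ring)

private lemma key_mono {u G G' : ℝ → ℝ} {c a b : ℝ}
    (hu : ContinuousOn u (Icc a b))
    (hG : ∀ σ, HasDerivAt G (G' σ) σ)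
    (h : ∀ σ ∈ Ioo a b, ∃ u', HasDerivAt u u' σ ∧
        Real.exp (c*σ) * (u' + c * u σ) ≤ G' σ) :
    ∀ ⦃s⦄, s ∈ Icc a b → ∀ ⦃t⦄, t ∈ Icc a b → s ≤ t →
      Real.exp (c*t) * u t - Real.exp (c*s) * u s ≤ G t - G s := by
  have hGc : Continuous G := by
    exact continuous_iff_continuousAt.mpr fun σ => (hG σ).differentiableAt.continuousAt
  have hmono : MonotoneOn (fun σ => G σ - Real.exp (c*σ) * u σ) (Icc a b) := by
    apply monotoneOn_of_deriv_nonneg (convex_Icc a b)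
    · exact hGc.continuousOn.sub
        ((Real.continuous_exp.comp (continuous_const.mul continuous_id)).continuousOn.mul hu)
    · intro σ hσ
      rw [interior_Icc] at hσ
      obtain ⟨u', hu', _⟩ := h σ hσ
      exact ((hG σ).sub ((expc_hasDeriv c σ).mul hu')).differentiableAt.differentiableWithinAt
    · intro σ hσ
      rw [interior_Icc] at hσ
      obtain ⟨u', hu', hle⟩ := h σ hσ
      rw [(show HasDerivAt (fun σ => G σ - Real.exp (c*σ) * u σ) _ σ from (hG σ).sub ((expc_hasDeriv c σ).mul hu')).deriv]
      ring_nf at hle ⊢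
      linarith
  intro s hs t ht hst
  have := hmono hs ht hst
  simp only [sub_le_sub_iff] at this ⊢
  linarith

private lemma pos_mono {u : ℝ → ℝ} {c a b : ℝ}
    (hu : ContinuousOn u (Icc a b))
    (h : ∀ σ ∈ Ioo a b, ∃ u', HasDerivAt u u' σ ∧ 0 ≤ u' + c * u σ) :
    MonotoneOn (fun σ => Real.exp (c*σ) * u σ) (Icc a b) := by
  apply monotoneOn_of_deriv_nonneg (convex_Icc a b)
  · exact (Real.continuous_exp.comp (continuous_const.mul continuous_id)).continuousOn.mul hu
  · intro σ hσ
    rw [interior_Icc] at hσ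
    obtain ⟨u', hu', _⟩ := h σ hσ
    exact ((expc_hasDeriv c σ).mul hu').differentiableAt.differentiableWithinAt
  · intro σ hσ
    rw [interior_Icc] at hσ
    obtain ⟨u', hu', hle⟩ := h σ hσ
    rw [(show HasDerivAt (fun σ => Real.exp (c*σ) * u σ) _ σ from (expc_hasDeriv c σ).mul hu').deriv]
    have := Real.exp_pos (c*σ)
    nlinarith

private lemma pos_strict {u : ℝ → ℝ} {c a b : ℝ}
    (hu : ContinuousOn u (Icc a b))
    (h : ∀ σ ∈ Ioo a b, ∃ u', HasDerivAt u u' σ ∧ 0 < u' + c * u σ) :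
    StrictMonoOn (fun σ => Real.exp (c*σ) * u σ) (Icc a b) := by
  apply strictMonoOn_of_deriv_pos (convex_Icc a b)
  · exact (Real.continuous_exp.comp (continuous_const.mul continuous_id)).continuousOn.mul hu
  · intro σ hσ
    rw [interior_Icc] at hσ
    obtain ⟨u', hu', hlt⟩ := h σ hσ
    rw [(show HasDerivAt (fun σ => Real.exp (c*σ) * u σ) _ σ from (expc_hasDeriv c σ).mul hu').deriv]
    have := Real.exp_pos (c*σ)
    nlinarith

private lemma lip_bound (f : ℝ → ℝ) (hf : ContDiff ℝ 1 f) (C : ℝ) :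
    ∃ L, 0 ≤ L ∧ ∀ p q : ℝ, |p| ≤ C → |q| ≤ C → |f p - f q| ≤ L * |p - q| := by
  obtain ⟨M, hM⟩ := isCompact_Icc.exists_bound_of_continuousOn
    (s := Icc (-C) C) ((hf.continuous_deriv le_rfl).continuousOn)
  refine ⟨max M 0, le_max_right _ _, fun p q hp hq => ?_⟩
  have hlip := Convex.norm_image_sub_le_of_norm_deriv_le
    (f := f) (s := Icc (-C) C) (C := max M 0)
    (fun x _ => hf.differentiable one_ne_zero x)
    (fun x hx => le_trans (hM x hx) (le_max_left _ _))
    (convex_Icc _ _) (mem_Icc.mpr (abs_le.mp hq)) (mem_Icc.mpr (abs_le.mp hp))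
  simpa [Real.norm_eq_abs] using hlip

private lemma pos_persist {u : ℝ → ℝ} {c t : ℝ} (ht : 0 < t)
    (hu : ContinuousOn u (Icc 0 t))
    (h : ∀ σ ∈ Ioo 0 t, ∃ u', HasDerivAt u u' σ ∧ 0 ≤ u' + c * u σ)
    (hu0 : 0 < u 0) : 0 < u t := by
  have h2 := pos_mono hu h (left_mem_Icc.mpr ht.le) (right_mem_Icc.mpr ht.le) ht.le
  simp only [mul_zero, Real.exp_zero, one_mul] at h2
  nlinarith [Real.exp_pos (c*t)]

private lemma pos_transfer {u g : ℝ → ℝ} {c t σ₀ : ℝ} (ht : 0 < t)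
    (hu : ContinuousOn u (Icc 0 t))
    (hderiv : ∀ σ ∈ Ioo 0 t, ∃ u', HasDerivAt u u' σ ∧ g σ ≤ u' + c * u σ)
    (hg0 : ∀ σ ∈ Ioo 0 t, 0 ≤ g σ)
    (hgc : ContinuousAt g σ₀)
    (hσ₀ : σ₀ ∈ Ioo 0 t) (hgpos : 0 < g σ₀)
    (hu0 : 0 ≤ u 0) : 0 < u t := by
  have hV : (g ⁻¹' Ioi 0 ∩ Ioo 0 t) ∈ 𝓝 σ₀ :=
    inter_mem (hgc (Ioi_mem_nhds hgpos)) ((isOpen_Ioo).mem_nhds hσ₀)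
  obtain ⟨ε, hε, hball⟩ := Metric.mem_nhds_iff.mp hV
  obtain ⟨σ₁, σ₂, hσ₁d, hσ₂d⟩ : ∃ σ₁ σ₂ : ℝ, σ₁ = σ₀ - ε/2 ∧ σ₂ = σ₀ + ε/2 := ⟨_, _, rfl, rfl⟩
  have h12 : σ₁ < σ₂ := by rw [hσ₁d, hσ₂d]; linarith
  have hsub : Icc σ₁ σ₂ ⊆ g ⁻¹' Ioi 0 ∩ Ioo 0 t := by
    intro s hs
    obtain ⟨hs1, hs2⟩ := mem_Icc.mp hs
    rw [hσ₁d] at hs1; rw [hσ₂d] at hs2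
    apply hball
    rw [Metric.mem_ball, Real.dist_eq, abs_lt]
    constructor <;> linarith
  have hσ₁ : σ₁ ∈ Ioo 0 t := (hsub ⟨le_refl _, h12.le⟩).2
  have hσ₂ : σ₂ ∈ Ioo 0 t := (hsub ⟨h12.le, le_refl _⟩).2
  have hIccsub : Icc σ₁ σ₂ ⊆ Icc 0 t := fun s hs =>
    ⟨le_trans hσ₁.1.le hs.1, le_trans hs.2 hσ₂.2.le⟩
  have hmono : MonotoneOn (fun σ => Real.exp (c*σ) * u σ) (Icc 0 t) :=
    pos_mono hu (fun σ hσ => by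
      obtain ⟨u', hu', hle⟩ := hderiv σ hσ
      exact ⟨u', hu', le_trans (hg0 σ hσ) hle⟩)
  have hstrict : StrictMonoOn (fun σ => Real.exp (c*σ) * u σ) (Icc σ₁ σ₂) :=
    pos_strict (hu.mono hIccsub) (fun σ hσ => by
      have hσ' := hsub (Ioo_subset_Icc_self hσ)
      obtain ⟨u', hu', hle⟩ := hderiv σ hσ'.2
      exact ⟨u', hu', lt_of_lt_of_le hσ'.1 hle⟩)
  have h1 : Real.exp (c*0) * u 0 ≤ Real.exp (c*σ₁) * u σ₁ :=
    hmono (left_mem_Icc.mpr ht.le) ⟨hσ₁.1.le, hσ₁.2.le⟩ hσ₁.1.le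
  have h2 : Real.exp (c*σ₁) * u σ₁ < Real.exp (c*σ₂) * u σ₂ :=
    hstrict (left_mem_Icc.mpr h12.le) (right_mem_Icc.mpr h12.le) h12
  have h3 : Real.exp (c*σ₂) * u σ₂ ≤ Real.exp (c*t) * u t :=
    hmono ⟨hσ₂.1.le, hσ₂.2.le⟩ (right_mem_Icc.mpr ht.le) hσ₂.2.le
  simp only [mul_zero, Real.exp_zero, one_mul] at h1
  nlinarith [Real.exp_pos (c*t)]

private lemma exp_mul_exp (c K σ : ℝ) :
    Real.exp (c*σ) * Real.exp (K*σ) = Real.exp ((K+c)*σ) := by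
  rw [← Real.exp_add]; ring_nf

private lemma gap_est {u : ℝ → ℝ} {c m K ε t' tstar : ℝ}
    (hm : 0 ≤ m) (hKc : m < K + c) (hε : 0 < ε)
    (hts : t' < tstar)
    (hu : ContinuousOn u (Icc t' tstar))
    (hd : ∀ σ ∈ Ioo t' tstar, ∃ u', HasDerivAt u u' σ ∧
        u' + c * u σ ≤ m * (ε * Real.exp (K*σ)))
    (hut' : u t' ≤ ε * Real.exp (K*t')) :
    0 < (1 - m/(K+c)) * ε * (Real.exp ((K+c)*tstar) - Real.exp ((K+c)*t'))
        / Real.exp (c*tstar) ∧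
    u tstar ≤ ε * Real.exp (K*tstar) -
      (1 - m/(K+c)) * ε * (Real.exp ((K+c)*tstar) - Real.exp ((K+c)*t'))
        / Real.exp (c*tstar) := by
  have hKc0 : 0 < K + c := lt_of_le_of_lt hm hKc
  have hθ : m/(K+c) < 1 := (div_lt_one hKc0).mpr hKc
  have hEE : Real.exp ((K+c)*t') < Real.exp ((K+c)*tstar) :=
    Real.exp_lt_exp.mpr (by nlinarith)
  have hA : 0 < Real.exp (c*tstar) := Real.exp_pos _
  have hγ : 0 < (1 - m/(K+c)) * ε * (Real.exp ((K+c)*tstar) - Real.exp ((K+c)*t'))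
      / Real.exp (c*tstar) := by
    apply div_pos _ hA
    apply mul_pos (mul_pos (by linarith) hε) (by linarith)
  refine ⟨hγ, ?_⟩
  have hkm := key_mono hu
    (G := fun σ => (m/(K+c) * ε) * Real.exp ((K+c)*σ))
    (G' := fun σ => (m/(K+c) * ε) * ((K+c) * Real.exp ((K+c)*σ)))
    (fun σ => (expc_hasDeriv (K+c) σ).const_mul (m/(K+c) * ε))
    (c := c) (a := t') (b := tstar)
    ?_ (left_mem_Icc.mpr hts.le) (right_mem_Icc.mpr hts.le) hts.le
  · -- final arithmetic
    have hut'' : Real.exp (c*t') * u t' ≤ ε * Real.exp ((K+c)*t') := by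
      calc Real.exp (c*t') * u t' ≤ Real.exp (c*t') * (ε * Real.exp (K*t')) :=
            mul_le_mul_of_nonneg_left hut' (Real.exp_pos _).le
        _ = ε * Real.exp ((K+c)*t') := by rw [← exp_mul_exp c K t']; ring
    have key : Real.exp (c*tstar) * u tstar ≤
        ε * Real.exp ((K+c)*tstar) -
        (1 - m/(K+c)) * ε * (Real.exp ((K+c)*tstar) - Real.exp ((K+c)*t')) := by
      have expand : (m/(K+c) * ε) * Real.exp ((K+c)*tstar)
          - (m/(K+c) * ε) * Real.exp ((K+c)*t')
          = ε * Real.exp ((K+c)*tstar) - ε * Real.exp ((K+c)*t')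
          - (1 - m/(K+c)) * ε * (Real.exp ((K+c)*tstar) - Real.exp ((K+c)*t')) := by
        ring
      linarith
    have hcancel : Real.exp (c*tstar) * (ε * Real.exp (K*tstar) -
        (1 - m/(K+c)) * ε * (Real.exp ((K+c)*tstar) - Real.exp ((K+c)*t'))
        / Real.exp (c*tstar)) = ε * Real.exp ((K+c)*tstar) -
        (1 - m/(K+c)) * ε * (Real.exp ((K+c)*tstar) - Real.exp ((K+c)*t')) := by
      rw [mul_sub, mul_div_cancel₀ _ hA.ne', ← exp_mul_exp c K tstar]; ring
    have := key.trans_eq hcancel.symm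
    exact (mul_le_mul_iff_right₀ hA).mp this
  · intro σ hσ
    obtain ⟨u', hu', hle⟩ := hd σ hσ
    refine ⟨u', hu', ?_⟩
    have e1 : Real.exp (c*σ) * (m*(ε*Real.exp (K*σ))) = m*ε*Real.exp ((K+c)*σ) := by
      rw [← exp_mul_exp c K σ]; ring
    have e2 : (m/(K+c)*ε)*((K+c)*Real.exp ((K+c)*σ)) = m*ε*Real.exp ((K+c)*σ) := by
      field_simp
    calc Real.exp (c*σ) * (u' + c * u σ) ≤ Real.exp (c*σ) * (m*(ε*Real.exp (K*σ))) :=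
          mul_le_mul_of_nonneg_left hle (Real.exp_pos _).le
      _ = m*ε*Real.exp ((K+c)*σ) := e1
      _ = (m/(K+c)*ε)*((K+c)*Real.exp ((K+c)*σ)) := e2.symm

private lemma ext_est {u : ℝ → ℝ} {c K ε γ D tstar s : ℝ}
    (hc : 0 ≤ c) (hε : 0 < ε) (hγ : 0 < γ) (hD : 0 < D)
    (h0ts : 0 ≤ tstar) (hts : tstar < s) (hsr : s ≤ tstar + γ/D)
    (hKpos : 0 < K)
    (hu : ContinuousOn u (Icc tstar s))
    (hd : ∀ σ ∈ Ioo tstar s, ∃ u', HasDerivAt u u' σ ∧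
        Real.exp (c*σ) * (u' + c * u σ) ≤ D)
    (huts : u tstar ≤ ε * Real.exp (K*tstar) - γ) :
    u s ≤ ε * Real.exp (K*s) := by
  have hkm := key_mono hu (G := fun σ => D*σ) (G' := fun _ => D)
    (fun σ => by simpa using (hasDerivAt_id σ).const_mul D)
    (c := c) (a := tstar) (b := s)
    (fun σ hσ => hd σ hσ)
    (left_mem_Icc.mpr hts.le) (right_mem_Icc.mpr hts.le) hts.le
  have h1 : D*(s - tstar) ≤ γ := by
    rw [← le_div_iff₀' hD]; linarith
  have h2 : (1:ℝ) ≤ Real.exp (c*tstar) := Real.one_le_exp (by positivity)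
  have h3 : Real.exp (c*tstar) * u tstar ≤
      ε * Real.exp ((K+c)*tstar) - Real.exp (c*tstar) * γ := by
    calc Real.exp (c*tstar) * u tstar
        ≤ Real.exp (c*tstar) * (ε * Real.exp (K*tstar) - γ) :=
          mul_le_mul_of_nonneg_left huts (Real.exp_pos _).le
      _ = ε * Real.exp ((K+c)*tstar) - Real.exp (c*tstar) * γ := by
          rw [← exp_mul_exp c K tstar]; ring
  have h4 : Real.exp (c*tstar) * γ ≥ γ := by nlinarith
  have h5 : ε * Real.exp ((K+c)*tstar) ≤ ε * Real.exp ((K+c)*s) := by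
    apply mul_le_mul_of_nonneg_left _ hε.le
    exact Real.exp_le_exp.mpr (by nlinarith)
  have h6 : Real.exp (c*s) * u s ≤ Real.exp (c*s) * (ε * Real.exp (K*s)) := by
    have e : Real.exp (c*s) * (ε * Real.exp (K*s)) = ε * Real.exp ((K+c)*s) := by
      rw [← exp_mul_exp c K s]; ring
    rw [e]; linarith
  exact (mul_le_mul_iff_right₀ (Real.exp_pos _)).mp h6

set_option maxHeartbeats 2000000 in
private lemma abstract_weak (T : ℝ) (hT : 0 < T)
    (x y : ℤ → ℝ → ℝ) (a b L C : ℝ)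
    (ha : 0 < a) (hb : 0 < b) (hL : 0 ≤ L) (hC : 1 ≤ C)
    (hxc : ∀ j, ContinuousOn (x j) (Icc 0 T))
    (hyc : ∀ j, ContinuousOn (y j) (Icc 0 T))
    (hx0 : ∀ j, x j 0 ≤ 0) (hy0 : ∀ j, y j 0 ≤ 0)
    (hxb : ∀ j, ∀ s ∈ Icc (0:ℝ) T, |x j s| ≤ 2*C)
    (hyb : ∀ j, ∀ s ∈ Icc (0:ℝ) T, |y j s| ≤ 2*C)
    (hdx : ∀ j, ∀ σ ∈ Ioo (0:ℝ) T, ∃ x', HasDerivAt (x j) x' σ ∧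
        x' + 2*a * x j σ ≤ b * (y j σ + y (j+1) σ))
    (hdy : ∀ j, ∀ σ ∈ Ioo (0:ℝ) T, ∃ y', HasDerivAt (y j) y' σ ∧
        y' + (L+2*b) * y j σ ≤ 2*L*(max (y j σ) 0) + a * (x j σ + x (j-1) σ)) :
    ∀ j, x j T ≤ 0 ∧ y j T ≤ 0 := by
  obtain ⟨K, hK⟩ : ∃ K : ℝ, K = 2*L + 2*a + 2*b + 1 := ⟨_, rfl⟩
  have hKpos : 0 < K := by simp only [hK]; linarith
  have hCpos : (0:ℝ) < C := by linarith
  -- the ε-claim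
  have main : ∀ ε : ℝ, 0 < ε → ∀ j, ∀ s ∈ Icc (0:ℝ) T,
      x j s ≤ ε * Real.exp (K*s) ∧ y j s ≤ ε * Real.exp (K*s) := by
    intro ε hε
    obtain ⟨S, hSdef⟩ : ∃ S : Set ℝ, S = {r | r ∈ Icc (0:ℝ) T ∧ ∀ j, ∀ s ∈ Icc (0:ℝ) r,
        x j s ≤ ε * Real.exp (K*s) ∧ y j s ≤ ε * Real.exp (K*s)} := ⟨_, rfl⟩
    have hSmem : ∀ r, r ∈ S ↔ (r ∈ Icc (0:ℝ) T ∧ ∀ j, ∀ s ∈ Icc (0:ℝ) r,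
        x j s ≤ ε * Real.exp (K*s) ∧ y j s ≤ ε * Real.exp (K*s)) := by
      intro r; rw [hSdef]; rfl
    have hepos : ∀ s : ℝ, 0 < ε * Real.exp (K*s) := fun s => by positivity
    have hS0 : (0:ℝ) ∈ S := by
      rw [hSmem]
      refine ⟨⟨le_refl _, hT.le⟩, fun j s hs => ?_⟩
      have hs0 : s = 0 := le_antisymm hs.2 hs.1
      rw [hs0]
      exact ⟨(hx0 j).trans (hepos 0).le, (hy0 j).trans (hepos 0).le⟩
    have hSne : S.Nonempty := ⟨0, hS0⟩
    have hSbdd : BddAbove S := ⟨T, fun r hr => ((hSmem r).mp hr).1.2⟩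
    obtain ⟨tstar, htstar⟩ : ∃ t : ℝ, t = sSup S := ⟨_, rfl⟩
    have h0ts : 0 ≤ tstar := by rw [htstar]; exact le_csSup hSbdd hS0
    have htsT : tstar ≤ T := by
      rw [htstar]; exact csSup_le hSne (fun r hr => ((hSmem r).mp hr).1.2)
    have hgood' : ∀ j, ∀ s, 0 ≤ s → s < tstar →
        x j s ≤ ε * Real.exp (K*s) ∧ y j s ≤ ε * Real.exp (K*s) := by
      intro j s hs0 hs
      have hs' : s < sSup S := by rw [← htstar]; exact hs
      obtain ⟨r, hrS, hsr⟩ := exists_lt_of_lt_csSup hSne hs' 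
      exact ((hSmem r).mp hrS).2 j s ⟨hs0, hsr.le⟩
    have hgood : ∀ j, ∀ s ∈ Icc (0:ℝ) tstar,
        x j s ≤ ε * Real.exp (K*s) ∧ y j s ≤ ε * Real.exp (K*s) := by
      intro j s hs
      rcases hs.2.lt_or_eq with hlt | heq
      · exact hgood' j s hs.1 hlt
      · rcases h0ts.eq_or_lt with h0 | h0
        · -- tstar = 0, s = tstar = 0
          rw [heq, ← h0]
          exact ⟨(hx0 j).trans (hepos 0).le, (hy0 j).trans (hepos 0).le⟩
        · -- 0 < tstar, limit argument
          rw [heq]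
          have hne : (𝓝[Ico (0:ℝ) tstar] tstar).NeBot := by
            apply mem_closure_iff_nhdsWithin_neBot.mp
            rw [closure_Ico (ne_of_lt h0)]
            exact ⟨h0.le, le_refl _⟩
          have hsub : Ico (0:ℝ) tstar ⊆ Icc 0 T := fun r hr => ⟨hr.1, hr.2.le.trans htsT⟩
          have hmem : tstar ∈ Icc (0:ℝ) T := ⟨h0.le, htsT⟩
          have hcontE : Continuous fun s' : ℝ => ε * Real.exp (K*s') := by
            exact continuous_const.mul (Real.continuous_exp.comp (continuous_const.mul continuous_id))
          have htendE : Tendsto (fun s' => ε * Real.exp (K*s')) (𝓝[Ico (0:ℝ) tstar] tstar)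
              (𝓝 (ε * Real.exp (K*tstar))) :=
            (hcontE.tendsto tstar).mono_left nhdsWithin_le_nhds
          constructor
          · refine le_of_tendsto_of_tendsto
              (((hxc j) tstar hmem).mono hsub) htendE ?_
            filter_upwards [eventually_mem_nhdsWithin] with r hr
            exact (hgood' j r hr.1 hr.2).1
          · refine le_of_tendsto_of_tendsto
              (((hyc j) tstar hmem).mono hsub) htendE ?_
            filter_upwards [eventually_mem_nhdsWithin] with r hr
            exact (hgood' j r hr.1 hr.2).2
    -- tstar = T
    have htseq : tstar = T := by
      by_contra hne
      have hlt : tstar < T := lt_of_le_of_ne htsT hne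
      -- uniform gap at tstar
      obtain ⟨γ, hγ0, hgap⟩ : ∃ γ : ℝ, 0 < γ ∧ ∀ j,
          x j tstar ≤ ε * Real.exp (K*tstar) - γ ∧
          y j tstar ≤ ε * Real.exp (K*tstar) - γ := by
        rcases h0ts.eq_or_lt with h0 | h0
        · refine ⟨ε, hε, fun j => ?_⟩
          rw [← h0]
          norm_num [Real.exp_zero]
          exact ⟨by linarith [hx0 j], by linarith [hy0 j]⟩
        · -- 0 < tstar
          have hts2 : tstar/2 < tstar := by linarith
          have hts2' : (0:ℝ) ≤ tstar/2 := by linarith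
          have hIsub : Icc (tstar/2) tstar ⊆ Icc 0 T :=
            fun r hr => ⟨hts2'.trans hr.1, hr.2.trans htsT⟩
          have hxgap : ∀ j, 0 < (1 - 2*b/(K+2*a)) * ε *
              (Real.exp ((K+2*a)*tstar) - Real.exp ((K+2*a)*(tstar/2)))
              / Real.exp (2*a*tstar) ∧
              x j tstar ≤ ε * Real.exp (K*tstar) - (1 - 2*b/(K+2*a)) * ε *
              (Real.exp ((K+2*a)*tstar) - Real.exp ((K+2*a)*(tstar/2)))
              / Real.exp (2*a*tstar) := by
            intro j
            apply gap_est (by linarith) (by simp only [hK]; linarith) hε hts2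
              ((hxc j).mono hIsub)
            · intro σ hσ
              have hσ' : σ ∈ Ioo (0:ℝ) T := ⟨lt_of_le_of_lt hts2' hσ.1, hσ.2.trans_le htsT⟩
              obtain ⟨x', hx', hle⟩ := hdx j σ hσ'
              refine ⟨x', hx', ?_⟩
              have g1 := (hgood' j σ hσ'.1.le hσ.2).1
              have g11 := (hgood' (j+1) σ hσ'.1.le hσ.2).2
              have g2 := (hgood' j σ hσ'.1.le hσ.2).2
              nlinarith
            · exact (hgood' j (tstar/2) hts2' hts2).1
          have hygap : ∀ j, 0 < (1 - (2*L+2*a)/(K+(L+2*b))) * ε *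
              (Real.exp ((K+(L+2*b))*tstar) - Real.exp ((K+(L+2*b))*(tstar/2)))
              / Real.exp ((L+2*b)*tstar) ∧
              y j tstar ≤ ε * Real.exp (K*tstar) - (1 - (2*L+2*a)/(K+(L+2*b))) * ε *
              (Real.exp ((K+(L+2*b))*tstar) - Real.exp ((K+(L+2*b))*(tstar/2)))
              / Real.exp ((L+2*b)*tstar) := by
            intro j
            apply gap_est (by linarith) (by simp only [hK]; linarith) hε hts2
              ((hyc j).mono hIsub)
            · intro σ hσ
              have hσ' : σ ∈ Ioo (0:ℝ) T := ⟨lt_of_le_of_lt hts2' hσ.1, hσ.2.trans_le htsT⟩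
              obtain ⟨y', hy', hle⟩ := hdy j σ hσ'
              refine ⟨y', hy', ?_⟩
              have g1 := (hgood' j σ hσ'.1.le hσ.2).2
              have g2 := (hgood' j σ hσ'.1.le hσ.2).1
              have g3 := (hgood' (j-1) σ hσ'.1.le hσ.2).1
              have g4 : max (y j σ) 0 ≤ ε * Real.exp (K*σ) :=
                max_le g1 (hepos σ).le
              nlinarith
            · exact (hgood' j (tstar/2) hts2' hts2).2
          obtain ⟨γx, hγx0, hgx⟩ : ∃ γx : ℝ, 0 < γx ∧ ∀ j,
              x j tstar ≤ ε * Real.exp (K*tstar) - γx :=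
            ⟨_, (hxgap 0).1, fun j => (hxgap j).2⟩
          obtain ⟨γy, hγy0, hgy⟩ : ∃ γy : ℝ, 0 < γy ∧ ∀ j,
              y j tstar ≤ ε * Real.exp (K*tstar) - γy :=
            ⟨_, (hygap 0).1, fun j => (hygap j).2⟩
          exact ⟨min γx γy, lt_min hγx0 hγy0, fun j =>
            ⟨le_trans (hgx j) (by linarith [min_le_left γx γy]),
             le_trans (hgy j) (by linarith [min_le_right γx γy])⟩⟩
      -- extension beyond tstar
      obtain ⟨D, hD0, hDx, hDy⟩ : ∃ D : ℝ, 0 < D ∧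
          (∀ j, ∀ σ ∈ Icc (0:ℝ) T,
            Real.exp (2*a*σ) * (b * (y j σ + y (j+1) σ)) ≤ D) ∧
          (∀ j, ∀ σ ∈ Icc (0:ℝ) T,
            Real.exp ((L+2*b)*σ) * (2*L*(max (y j σ) 0) + a * (x j σ + x (j-1) σ)) ≤ D) := by
        refine ⟨Real.exp ((2*a + L + 2*b)*T) * ((4*b + 4*L + 4*a)*C) + 1, ?_, ?_, ?_⟩
        · have h1 : (0:ℝ) < (4*b + 4*L + 4*a)*C := by nlinarith
          nlinarith [mul_pos (Real.exp_pos ((2*a + L + 2*b)*T)) h1]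
        · intro j σ hσ
          have h1 := hyb j σ hσ
          have h2 := hyb (j+1) σ hσ
          rw [abs_le] at h1 h2
          have hbnd : b * (y j σ + y (j+1) σ) ≤ (4*b)*C := by nlinarith
          have hexp1 : Real.exp (2*a*σ) ≤ Real.exp ((2*a + L + 2*b)*T) := by
            apply Real.exp_le_exp.mpr; nlinarith [hσ.1, hσ.2]
          have hexp0 : (0:ℝ) < Real.exp (2*a*σ) := Real.exp_pos _
          have step : Real.exp (2*a*σ) * (b * (y j σ + y (j+1) σ)) ≤
              Real.exp (2*a*σ) * ((4*b)*C) := mul_le_mul_of_nonneg_left hbnd hexp0.le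
          have h4 : (0:ℝ) ≤ (4*b)*C := by positivity
          have h5 : (4*b)*C ≤ (4*b + 4*L + 4*a)*C := by nlinarith
          nlinarith [Real.exp_pos ((2*a + L + 2*b)*T)]
        · intro j σ hσ
          have h1 := hyb j σ hσ
          have h2 := hxb j σ hσ
          have h3 := hxb (j-1) σ hσ
          rw [abs_le] at h1 h2 h3
          have h4 : max (y j σ) 0 ≤ 2*C := max_le h1.2 (by linarith)
          have hbnd : 2*L*(max (y j σ) 0) + a * (x j σ + x (j-1) σ) ≤ (4*L + 4*a)*C := by
            nlinarith
          have hexp1 : Real.exp ((L+2*b)*σ) ≤ Real.exp ((2*a + L + 2*b)*T) := by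
            apply Real.exp_le_exp.mpr; nlinarith [hσ.1, hσ.2]
          have hexp0 : (0:ℝ) < Real.exp ((L+2*b)*σ) := Real.exp_pos _
          have step : Real.exp ((L+2*b)*σ) * (2*L*(max (y j σ) 0) + a * (x j σ + x (j-1) σ)) ≤
              Real.exp ((L+2*b)*σ) * ((4*L + 4*a)*C) := mul_le_mul_of_nonneg_left hbnd hexp0.le
          have h5 : (0:ℝ) ≤ (4*L+4*a)*C := by positivity
          have h6 : (4*L+4*a)*C ≤ (4*b + 4*L + 4*a)*C := by nlinarith
          nlinarith [Real.exp_pos ((2*a + L + 2*b)*T)]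
      obtain ⟨r, htr, hrT, hrg⟩ : ∃ r : ℝ, tstar < r ∧ r ≤ T ∧ r ≤ tstar + γ/D :=
        ⟨min (tstar + γ/D) T,
         lt_min (by have : 0 < γ/D := div_pos hγ0 hD0; linarith) hlt,
         min_le_right _ _, min_le_left _ _⟩
      have hrS : r ∈ S := by
        rw [hSmem]
        refine ⟨⟨h0ts.trans htr.le, hrT⟩, fun j s hs => ?_⟩
        rcases le_or_gt s tstar with hle | hgt
        · exact hgood j s ⟨hs.1, hle⟩
        · have hsT' : s ≤ T := hs.2.trans hrT
          have hsr' : s ≤ tstar + γ/D := hs.2.trans hrg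
          have hIsub2 : Icc tstar s ⊆ Icc 0 T := fun q hq => ⟨h0ts.trans hq.1, hq.2.trans hsT'⟩
          constructor
          · apply ext_est (by linarith : (0:ℝ) ≤ 2*a) hε hγ0 hD0 h0ts hgt hsr' hKpos
              ((hxc j).mono hIsub2) _ (hgap j).1
            intro σ hσ
            have hσ' : σ ∈ Ioo (0:ℝ) T := ⟨h0ts.trans_lt hσ.1, hσ.2.trans_le hsT'⟩
            obtain ⟨x', hx', hle⟩ := hdx j σ hσ'
            refine ⟨x', hx', ?_⟩
            refine le_trans ?_ (hDx j σ ⟨hσ'.1.le, hσ'.2.le⟩)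
            exact mul_le_mul_of_nonneg_left hle (Real.exp_pos _).le
          · apply ext_est (by linarith : (0:ℝ) ≤ L+2*b) hε hγ0 hD0 h0ts hgt hsr' hKpos
              ((hyc j).mono hIsub2) _ (hgap j).2
            intro σ hσ
            have hσ' : σ ∈ Ioo (0:ℝ) T := ⟨h0ts.trans_lt hσ.1, hσ.2.trans_le hsT'⟩
            obtain ⟨y', hy', hle⟩ := hdy j σ hσ'
            refine ⟨y', hy', ?_⟩
            refine le_trans ?_ (hDy j σ ⟨hσ'.1.le, hσ'.2.le⟩)
            exact mul_le_mul_of_nonneg_left hle (Real.exp_pos _).le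
      have := le_csSup hSbdd hrS
      rw [← htstar] at this
      exact absurd this (not_le.mpr htr)
    intro j s hs
    rw [← htseq] at hs
    exact hgood j s hs
  -- conclude
  intro j
  constructor
  · by_contra hpos
    push_neg at hpos
    have hE : (0:ℝ) < Real.exp (K*T) := Real.exp_pos _
    have hε : 0 < x j T / (2 * Real.exp (K*T)) := by positivity
    have h2 := (main _ hε j T (right_mem_Icc.mpr hT.le)).1
    have he : x j T / (2 * Real.exp (K*T)) * Real.exp (K*T) = x j T / 2 := by
      field_simp
    rw [he] at h2
    linarith
  · by_contra hpos
    push_neg at hpos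
    have hE : (0:ℝ) < Real.exp (K*T) := Real.exp_pos _
    have hε : 0 < y j T / (2 * Real.exp (K*T)) := by positivity
    have h2 := (main _ hε j T (right_mem_Icc.mpr hT.le)).2
    have he : y j T / (2 * Real.exp (K*T)) * Real.exp (K*T) = y j T / 2 := by
      field_simp
    rw [he] at h2
    linarith

private lemma habs2 (z : ℝ) : |z| = 2 * max z 0 - z := by
  rcases le_total 0 z with h | h
  · rw [abs_of_nonneg h, max_eq_left h]; ring
  · rw [abs_of_nonpos h, max_eq_right h]; ring

private lemma weak_comparison (α β : ℝ) (hα : 0 < α) (hβ : 0 < β)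
    (f : ℝ → ℝ) (hf : ContDiff ℝ 1 f)
    (Vlo Vhi Plo Phi : ℤ → ℝ → ℝ)
    (hsub : AsympSubSolution α β f Vlo Plo)
    (hsup : AsympSuperSolution α β f Vhi Phi)
    (hloclo : AsympLocBdd Vlo Plo) (hlochi : AsympLocBdd Vhi Phi)
    (hinit : ∀ j, Vlo j 0 ≤ Vhi j 0 ∧ Plo j 0 ≤ Phi j 0) :
    ∀ j, ∀ t : ℝ, 0 ≤ t → Vlo j t ≤ Vhi j t ∧ Plo j t ≤ Phi j t := by
  intro j t ht0
  rcases ht0.eq_or_lt with h | hT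
  · rw [← h]; exact hinit j
  obtain ⟨C1, hC1⟩ := hloclo t hT
  obtain ⟨C2, hC2⟩ := hlochi t hT
  obtain ⟨C, hC1le, hC2le, hC1'⟩ : ∃ C : ℝ, C1 ≤ C ∧ C2 ≤ C ∧ 1 ≤ C :=
    ⟨max 1 (max C1 C2), le_trans (le_max_left _ _) (le_max_right _ _),
     le_trans (le_max_right _ _) (le_max_right _ _), le_max_left _ _⟩
  obtain ⟨L, hL0, hLip⟩ := lip_bound f hf C
  have hbd : ∀ (i : ℤ), ∀ s ∈ Icc (0:ℝ) t,
      |Vlo i s| ≤ C ∧ |Plo i s| ≤ C ∧ |Vhi i s| ≤ C ∧ |Phi i s| ≤ C := by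
    intro i s hs
    obtain ⟨a1, a2⟩ := hC1 i s hs
    obtain ⟨a3, a4⟩ := hC2 i s hs
    exact ⟨a1.trans hC1le, a2.trans hC1le, a3.trans hC2le, a4.trans hC2le⟩
  have hxc : ∀ i : ℤ, ContinuousOn (fun s => Vlo i s - Vhi i s) (Icc 0 t) := fun i =>
    ((hsub.1 i).1.continuousOn.mono Icc_subset_Ici_self).sub
      ((hsup.1 i).1.continuousOn.mono Icc_subset_Ici_self)
  have hyc : ∀ i : ℤ, ContinuousOn (fun s => Plo i s - Phi i s) (Icc 0 t) := fun i =>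
    ((hsub.1 i).2.continuousOn.mono Icc_subset_Ici_self).sub
      ((hsup.1 i).2.continuousOn.mono Icc_subset_Ici_self)
  have hx0 : ∀ i : ℤ, Vlo i 0 - Vhi i 0 ≤ 0 := fun i => by linarith [(hinit i).1]
  have hy0 : ∀ i : ℤ, Plo i 0 - Phi i 0 ≤ 0 := fun i => by linarith [(hinit i).2]
  have hxb : ∀ i : ℤ, ∀ s ∈ Icc (0:ℝ) t, |Vlo i s - Vhi i s| ≤ 2*C := by
    intro i s hs
    obtain ⟨a1, -, a3, -⟩ := hbd i s hs
    calc |Vlo i s - Vhi i s| ≤ |Vlo i s| + |Vhi i s| := abs_sub _ _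
      _ ≤ 2*C := by linarith
  have hyb : ∀ i : ℤ, ∀ s ∈ Icc (0:ℝ) t, |Plo i s - Phi i s| ≤ 2*C := by
    intro i s hs
    obtain ⟨-, a2, -, a4⟩ := hbd i s hs
    calc |Plo i s - Phi i s| ≤ |Plo i s| + |Phi i s| := abs_sub _ _
      _ ≤ 2*C := by linarith
  have hdx : ∀ i : ℤ, ∀ σ ∈ Ioo (0:ℝ) t, ∃ x',
      HasDerivAt (fun s => Vlo i s - Vhi i s) x' σ ∧
      x' + 2*α * (Vlo i σ - Vhi i σ) ≤
        β * ((Plo i σ - Phi i σ) + (Plo (i+1) σ - Phi (i+1) σ)) := by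
    intro i σ hσ
    have dV1 : DifferentiableAt ℝ (Vlo i) σ :=
      ((hsub.1 i).1.differentiableOn one_ne_zero).differentiableAt (Ici_mem_nhds hσ.1)
    have dV2 : DifferentiableAt ℝ (Vhi i) σ :=
      ((hsup.1 i).1.differentiableOn one_ne_zero).differentiableAt (Ici_mem_nhds hσ.1)
    refine ⟨deriv (Vlo i) σ - deriv (Vhi i) σ, dV1.hasDerivAt.sub dV2.hasDerivAt, ?_⟩
    have h1 := (hsub.2 i σ hσ.1).1
    have h2 := (hsup.2 i σ hσ.1).1
    ring_nf at h1 h2 ⊢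
    linarith
  have hdy : ∀ i : ℤ, ∀ σ ∈ Ioo (0:ℝ) t, ∃ y',
      HasDerivAt (fun s => Plo i s - Phi i s) y' σ ∧
      y' + (L+2*β) * (Plo i σ - Phi i σ) ≤
        2*L*(max (Plo i σ - Phi i σ) 0) +
        α * ((Vlo i σ - Vhi i σ) + (Vlo (i-1) σ - Vhi (i-1) σ)) := by
    intro i σ hσ
    have dP1 : DifferentiableAt ℝ (Plo i) σ :=
      ((hsub.1 i).2.differentiableOn one_ne_zero).differentiableAt (Ici_mem_nhds hσ.1)
    have dP2 : DifferentiableAt ℝ (Phi i) σ :=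
      ((hsup.1 i).2.differentiableOn one_ne_zero).differentiableAt (Ici_mem_nhds hσ.1)
    refine ⟨deriv (Plo i) σ - deriv (Phi i) σ, dP1.hasDerivAt.sub dP2.hasDerivAt, ?_⟩
    have h1 := (hsub.2 i σ hσ.1).2
    have h2 := (hsup.2 i σ hσ.1).2
    obtain ⟨-, b1, -, b2⟩ := hbd i σ ⟨hσ.1.le, hσ.2.le⟩
    have hfl := hLip (Plo i σ) (Phi i σ) b1 b2
    have hfle : f (Plo i σ) - f (Phi i σ) ≤
        L * (2 * max (Plo i σ - Phi i σ) 0 - (Plo i σ - Phi i σ)) := by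
      calc f (Plo i σ) - f (Phi i σ) ≤ |f (Plo i σ) - f (Phi i σ)| := le_abs_self _
        _ ≤ L * |Plo i σ - Phi i σ| := hfl
        _ = L * (2 * max (Plo i σ - Phi i σ) 0 - (Plo i σ - Phi i σ)) := by
            rw [habs2]
    ring_nf at h1 h2 hfle ⊢
    linarith
  have hmain := abstract_weak t hT (fun i s => Vlo i s - Vhi i s) (fun i s => Plo i s - Phi i s)
    α β L C hα hβ hL0 hC1' hxc hyc hx0 hy0 hxb hyb hdx hdy
  obtain ⟨m1, m2⟩ := hmain j
  exact ⟨by linarith, by linarith⟩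

section strict

variable {α β : ℝ} {f : ℝ → ℝ} {Vlo Vhi Plo Phi : ℤ → ℝ → ℝ}

private lemma get_lip (hf : ContDiff ℝ 1 f)
    (hloclo : AsympLocBdd Vlo Plo) (hlochi : AsympLocBdd Vhi Phi)
    (t : ℝ) (ht : 0 < t) :
    ∃ L, 0 ≤ L ∧ ∀ i : ℤ, ∀ s ∈ Icc (0:ℝ) t,
      |f (Phi i s) - f (Plo i s)| ≤ L * |Phi i s - Plo i s| := by
  obtain ⟨C1, hC1⟩ := hloclo t ht
  obtain ⟨C2, hC2⟩ := hlochi t ht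
  obtain ⟨L, hL0, hLip⟩ := lip_bound f hf (max C1 C2)
  exact ⟨L, hL0, fun i s hs => hLip _ _ ((hC2 i s hs).2.trans (le_max_right _ _))
    ((hC1 i s hs).2.trans (le_max_left _ _))⟩

private lemma W_cont (hsub : AsympSubSolution α β f Vlo Plo)
    (hsup : AsympSuperSolution α β f Vhi Phi) (i : ℤ) (t : ℝ) :
    ContinuousOn (fun s => Vhi i s - Vlo i s) (Icc 0 t) :=
  ((hsup.1 i).1.continuousOn.mono Icc_subset_Ici_self).sub
    ((hsub.1 i).1.continuousOn.mono Icc_subset_Ici_self)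

private lemma Q_cont (hsub : AsympSubSolution α β f Vlo Plo)
    (hsup : AsympSuperSolution α β f Vhi Phi) (i : ℤ) (t : ℝ) :
    ContinuousOn (fun s => Phi i s - Plo i s) (Icc 0 t) :=
  ((hsup.1 i).2.continuousOn.mono Icc_subset_Ici_self).sub
    ((hsub.1 i).2.continuousOn.mono Icc_subset_Ici_self)

private lemma W_deriv (hsub : AsympSubSolution α β f Vlo Plo)
    (hsup : AsympSuperSolution α β f Vhi Phi) (i : ℤ) {t : ℝ} :
    ∀ σ ∈ Ioo (0:ℝ) t, ∃ w', HasDerivAt (fun s => Vhi i s - Vlo i s) w' σ ∧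
      β * ((Phi i σ - Plo i σ) + (Phi (i+1) σ - Plo (i+1) σ)) ≤
        w' + 2*α * (Vhi i σ - Vlo i σ) := by
  intro σ hσ
  have dV1 : DifferentiableAt ℝ (Vhi i) σ :=
    ((hsup.1 i).1.differentiableOn one_ne_zero).differentiableAt (Ici_mem_nhds hσ.1)
  have dV2 : DifferentiableAt ℝ (Vlo i) σ :=
    ((hsub.1 i).1.differentiableOn one_ne_zero).differentiableAt (Ici_mem_nhds hσ.1)
  refine ⟨_, dV1.hasDerivAt.sub dV2.hasDerivAt, ?_⟩
  have h1 := (hsub.2 i σ hσ.1).1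
  have h2 := (hsup.2 i σ hσ.1).1
  ring_nf at h1 h2 ⊢
  linarith

private lemma Q_deriv (hα : 0 < α) (hβ : 0 < β)
    (hsub : AsympSubSolution α β f Vlo Plo)
    (hsup : AsympSuperSolution α β f Vhi Phi)
    (hweak : ∀ j, ∀ s : ℝ, 0 ≤ s → Vlo j s ≤ Vhi j s ∧ Plo j s ≤ Phi j s)
    {L : ℝ} {t : ℝ}
    (hLip : ∀ i : ℤ, ∀ s ∈ Icc (0:ℝ) t,
      |f (Phi i s) - f (Plo i s)| ≤ L * |Phi i s - Plo i s|)
    (i : ℤ) :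
    ∀ σ ∈ Ioo (0:ℝ) t, ∃ q', HasDerivAt (fun s => Phi i s - Plo i s) q' σ ∧
      α * ((Vhi i σ - Vlo i σ) + (Vhi (i-1) σ - Vlo (i-1) σ)) ≤
        q' + (L+2*β) * (Phi i σ - Plo i σ) := by
  intro σ hσ
  have dP1 : DifferentiableAt ℝ (Phi i) σ :=
    ((hsup.1 i).2.differentiableOn one_ne_zero).differentiableAt (Ici_mem_nhds hσ.1)
  have dP2 : DifferentiableAt ℝ (Plo i) σ :=
    ((hsub.1 i).2.differentiableOn one_ne_zero).differentiableAt (Ici_mem_nhds hσ.1)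
  refine ⟨_, dP1.hasDerivAt.sub dP2.hasDerivAt, ?_⟩
  have h1 := (hsub.2 i σ hσ.1).2
  have h2 := (hsup.2 i σ hσ.1).2
  have hQ : 0 ≤ Phi i σ - Plo i σ := by linarith [(hweak i σ hσ.1.le).2]
  have hfl := hLip i σ ⟨hσ.1.le, hσ.2.le⟩
  rw [abs_of_nonneg hQ] at hfl
  have h3 : f (Plo i σ) - f (Phi i σ) ≤ |f (Phi i σ) - f (Plo i σ)| := by
    rw [abs_sub_comm]; exact le_abs_self _
  have hfl2 : f (Plo i σ) - f (Phi i σ) ≤ L * (Phi i σ - Plo i σ) := h3.trans hfl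
  ring_nf at h1 h2 hfl2 ⊢
  linarith

private lemma seedW (hα : 0 < α) (hβ : 0 < β)
    (hsub : AsympSubSolution α β f Vlo Plo)
    (hsup : AsympSuperSolution α β f Vhi Phi)
    (hweak : ∀ j, ∀ s : ℝ, 0 ≤ s → Vlo j s ≤ Vhi j s ∧ Plo j s ≤ Phi j s)
    (k : ℤ) (h0 : Vlo k 0 < Vhi k 0) : ∀ t : ℝ, 0 < t → Vlo k t < Vhi k t := by
  intro t ht
  have key := pos_persist (c := 2*α) ht (W_cont hsub hsup k t) (fun σ hσ => by
    obtain ⟨w', hw', hle⟩ := W_deriv hsub hsup k σ hσ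
    refine ⟨w', hw', le_trans ?_ hle⟩
    have q1 := (hweak k σ hσ.1.le).2
    have q2 := (hweak (k+1) σ hσ.1.le).2
    nlinarith) (show (0:ℝ) < Vhi k 0 - Vlo k 0 by linarith)
  have key2 : 0 < Vhi k t - Vlo k t := key
  linarith

private lemma seedQ (hα : 0 < α) (hβ : 0 < β) (hf : ContDiff ℝ 1 f)
    (hsub : AsympSubSolution α β f Vlo Plo)
    (hsup : AsympSuperSolution α β f Vhi Phi)
    (hloclo : AsympLocBdd Vlo Plo) (hlochi : AsympLocBdd Vhi Phi)
    (hweak : ∀ j, ∀ s : ℝ, 0 ≤ s → Vlo j s ≤ Vhi j s ∧ Plo j s ≤ Phi j s)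
    (k : ℤ) (h0 : Plo k 0 < Phi k 0) : ∀ t : ℝ, 0 < t → Plo k t < Phi k t := by
  intro t ht
  obtain ⟨L, hL0, hLip⟩ := get_lip hf hloclo hlochi t ht
  have key := pos_persist (c := L+2*β) ht (Q_cont hsub hsup k t) (fun σ hσ => by
    obtain ⟨q', hq', hle⟩ := Q_deriv hα hβ hsub hsup hweak hLip k σ hσ
    refine ⟨q', hq', le_trans ?_ hle⟩
    have w1 := (hweak k σ hσ.1.le).1
    have w2 := (hweak (k-1) σ hσ.1.le).1
    nlinarith) (show (0:ℝ) < Phi k 0 - Plo k 0 by linarith)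
  have key2 : 0 < Phi k t - Plo k t := key
  linarith

private lemma strictW (hα : 0 < α) (hβ : 0 < β)
    (hsub : AsympSubSolution α β f Vlo Plo)
    (hsup : AsympSuperSolution α β f Vhi Phi)
    (hweak : ∀ j, ∀ s : ℝ, 0 ≤ s → Vlo j s ≤ Vhi j s ∧ Plo j s ≤ Phi j s)
    (k : ℤ) (hkQ : ∀ s : ℝ, 0 < s → Plo k s < Phi k s) :
    ∀ j : ℤ, j = k ∨ j = k - 1 → ∀ t : ℝ, 0 < t → Vlo j t < Vhi j t := by
  intro j hj t ht
  have ht2 : t/2 ∈ Ioo (0:ℝ) t := ⟨by linarith, by linarith⟩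
  have hgc : ContinuousAt
      (fun σ => β * ((Phi j σ - Plo j σ) + (Phi (j+1) σ - Plo (j+1) σ))) (t/2) := by
    have c1 : ContinuousAt (Phi j) (t/2) :=
      ((hsup.1 j).2.continuousOn.continuousAt (Ici_mem_nhds ht2.1))
    have c2 : ContinuousAt (Plo j) (t/2) :=
      ((hsub.1 j).2.continuousOn.continuousAt (Ici_mem_nhds ht2.1))
    have c3 : ContinuousAt (Phi (j+1)) (t/2) :=
      ((hsup.1 (j+1)).2.continuousOn.continuousAt (Ici_mem_nhds ht2.1))
    have c4 : ContinuousAt (Plo (j+1)) (t/2) :=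
      ((hsub.1 (j+1)).2.continuousOn.continuousAt (Ici_mem_nhds ht2.1))
    exact continuousAt_const.mul ((c1.sub c2).add (c3.sub c4))
  have hgpos : 0 < β * ((Phi j (t/2) - Plo j (t/2)) + (Phi (j+1) (t/2) - Plo (j+1) (t/2))) := by
    rcases hj with rfl | rfl
    · have q1 := hkQ (t/2) ht2.1
      have q2 := (hweak (j+1) (t/2) ht2.1.le).2
      nlinarith
    · have heq : k - 1 + 1 = k := by omega
      rw [heq]
      have q1 := hkQ (t/2) ht2.1
      have q2 := (hweak (k-1) (t/2) ht2.1.le).2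
      nlinarith
  have key := pos_transfer (c := 2*α) (σ₀ := t/2) ht (W_cont hsub hsup j t)
    (W_deriv hsub hsup j)
    (fun σ hσ => by
      have q1 := (hweak j σ hσ.1.le).2
      have q2 := (hweak (j+1) σ hσ.1.le).2
      nlinarith)
    hgc ht2 hgpos (show (0:ℝ) ≤ Vhi j 0 - Vlo j 0 by linarith [(hweak j 0 le_rfl).1])
  have key2 : 0 < Vhi j t - Vlo j t := key
  linarith

private lemma strictQ (hα : 0 < α) (hβ : 0 < β) (hf : ContDiff ℝ 1 f)
    (hsub : AsympSubSolution α β f Vlo Plo)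
    (hsup : AsympSuperSolution α β f Vhi Phi)
    (hloclo : AsympLocBdd Vlo Plo) (hlochi : AsympLocBdd Vhi Phi)
    (hweak : ∀ j, ∀ s : ℝ, 0 ≤ s → Vlo j s ≤ Vhi j s ∧ Plo j s ≤ Phi j s)
    (k : ℤ) (hkW : ∀ s : ℝ, 0 < s → Vlo k s < Vhi k s) :
    ∀ j : ℤ, j = k ∨ j = k + 1 → ∀ t : ℝ, 0 < t → Plo j t < Phi j t := by
  intro j hj t ht
  obtain ⟨L, hL0, hLip⟩ := get_lip hf hloclo hlochi t ht
  have ht2 : t/2 ∈ Ioo (0:ℝ) t := ⟨by linarith, by linarith⟩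
  have hgc : ContinuousAt
      (fun σ => α * ((Vhi j σ - Vlo j σ) + (Vhi (j-1) σ - Vlo (j-1) σ))) (t/2) := by
    have c1 : ContinuousAt (Vhi j) (t/2) :=
      ((hsup.1 j).1.continuousOn.continuousAt (Ici_mem_nhds ht2.1))
    have c2 : ContinuousAt (Vlo j) (t/2) :=
      ((hsub.1 j).1.continuousOn.continuousAt (Ici_mem_nhds ht2.1))
    have c3 : ContinuousAt (Vhi (j-1)) (t/2) :=
      ((hsup.1 (j-1)).1.continuousOn.continuousAt (Ici_mem_nhds ht2.1))
    have c4 : ContinuousAt (Vlo (j-1)) (t/2) :=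
      ((hsub.1 (j-1)).1.continuousOn.continuousAt (Ici_mem_nhds ht2.1))
    exact continuousAt_const.mul ((c1.sub c2).add (c3.sub c4))
  have hgpos : 0 < α * ((Vhi j (t/2) - Vlo j (t/2)) + (Vhi (j-1) (t/2) - Vlo (j-1) (t/2))) := by
    rcases hj with rfl | rfl
    · have w1 := hkW (t/2) ht2.1
      have w2 := (hweak (j-1) (t/2) ht2.1.le).1
      nlinarith
    · have heq : k + 1 - 1 = k := by omega
      rw [heq]
      have w1 := hkW (t/2) ht2.1
      have w2 := (hweak (k+1) (t/2) ht2.1.le).1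
      nlinarith
  have key := pos_transfer (c := L+2*β) (σ₀ := t/2) ht (Q_cont hsub hsup j t)
    (Q_deriv hα hβ hsub hsup hweak hLip j)
    (fun σ hσ => by
      have w1 := (hweak j σ hσ.1.le).1
      have w2 := (hweak (j-1) σ hσ.1.le).1
      nlinarith)
    hgc ht2 hgpos (show (0:ℝ) ≤ Phi j 0 - Plo j 0 by linarith [(hweak j 0 le_rfl).2])
  have key2 : 0 < Phi j t - Plo j t := key
  linarith

private lemma strict_all (hα : 0 < α) (hβ : 0 < β) (hf : ContDiff ℝ 1 f)
    (hsub : AsympSubSolution α β f Vlo Plo)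
    (hsup : AsympSuperSolution α β f Vhi Phi)
    (hloclo : AsympLocBdd Vlo Plo) (hlochi : AsympLocBdd Vhi Phi)
    (hweak : ∀ j, ∀ s : ℝ, 0 ≤ s → Vlo j s ≤ Vhi j s ∧ Plo j s ≤ Phi j s)
    (k : ℤ) (hkW : ∀ s : ℝ, 0 < s → Vlo k s < Vhi k s) :
    ∀ j : ℤ, ∀ t : ℝ, 0 < t → Vlo j t < Vhi j t ∧ Plo j t < Phi j t := by
  have step : ∀ m : ℤ, (∀ s : ℝ, 0 < s → Vlo m s < Vhi m s) →
      (∀ s : ℝ, 0 < s → Vlo (m+1) s < Vhi (m+1) s) ∧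
      (∀ s : ℝ, 0 < s → Vlo (m-1) s < Vhi (m-1) s) := by
    intro m hm
    have hQ := strictQ hα hβ hf hsub hsup hloclo hlochi hweak m hm
    constructor
    · exact strictW hα hβ hsub hsup hweak (m+1)
        (hQ (m+1) (Or.inr rfl)) (m+1) (Or.inl rfl)
    · exact strictW hα hβ hsub hsup hweak m
        (hQ m (Or.inl rfl)) (m-1) (Or.inr rfl)
  have hallW : ∀ j : ℤ, ∀ s : ℝ, 0 < s → Vlo j s < Vhi j s := by
    have hind : ∀ n : ℤ, ∀ s : ℝ, 0 < s → Vlo (k+n) s < Vhi (k+n) s := by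
      intro n
      induction n using Int.induction_on with
      | zero => simpa using hkW
      | succ i ih =>
          have heq : k + (i+1 : ℤ) = (k + i) + 1 := by ring
          rw [heq]
          exact (step (k+i) ih).1
      | pred i ih =>
          have heq : k + (-(i:ℤ)-1) = (k + -(i:ℤ)) - 1 := by ring
          rw [heq]
          exact (step (k + -(i:ℤ)) ih).2
    intro j
    have heq : k + (j - k) = j := by ring
    have := hind (j - k)
    rwa [heq] at this
  intro j t ht
  refine ⟨hallW j t ht, ?_⟩
  exact strictQ hα hβ hf hsub hsup hloclo hlochi hweak j (hallW j) j (Or.inl rfl) t ht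

end strict

/-- **Comparison principle for the asymptotic system** (Proposition 6.2): an ordered pair of
sub/supersolutions at time `0` stays ordered for all positive times, strictly so if the
initial data differ somewhere. -/
theorem asymptotic_comparison_principle
    (α β : ℝ) (hα : 0 < α) (hβ : 0 < β)
    (f : ℝ → ℝ) (hf : ContDiff ℝ 1 f) (hf0 : f 0 = 0) (hf1 : f 1 = 0)
    (hfpos : ∀ u ∈ Ioo (0:ℝ) 1, 0 < f u ∧ f u ≤ deriv f 0 * u)
    (hfneg : ∀ u : ℝ, u ∉ Icc (0:ℝ) 1 → f u < 0)
    (Vlo Vhi Plo Phi : ℤ → ℝ → ℝ)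
    (hsub : AsympSubSolution α β f Vlo Plo)
    (hsup : AsympSuperSolution α β f Vhi Phi)
    (hloclo : AsympLocBdd Vlo Plo) (hlochi : AsympLocBdd Vhi Phi)
    (hinit : ∀ j, Vlo j 0 ≤ Vhi j 0 ∧ Plo j 0 ≤ Phi j 0) :
    (∀ j, ∀ t : ℝ, 0 < t → Vlo j t ≤ Vhi j t ∧ Plo j t ≤ Phi j t) ∧
    (((∃ j, Vlo j 0 ≠ Vhi j 0) ∨ (∃ j, Plo j 0 ≠ Phi j 0)) →
      ∀ j, ∀ t : ℝ, 0 < t → Vlo j t < Vhi j t ∧ Plo j t < Phi j t) := by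
  have hweak := weak_comparison α β hα hβ f hf Vlo Vhi Plo Phi hsub hsup hloclo hlochi hinit
  refine ⟨fun j t ht => hweak j t ht.le, ?_⟩
  rintro (⟨j, hne⟩ | ⟨j, hne⟩)
  · have h0 : Vlo j 0 < Vhi j 0 := lt_of_le_of_ne (hinit j).1 hne
    exact strict_all hα hβ hf hsub hsup hloclo hlochi hweak j
      (seedW hα hβ hsub hsup hweak j h0)
  · have h0 : Plo j 0 < Phi j 0 := lt_of_le_of_ne (hinit j).2 hne
    have hQ := seedQ hα hβ hf hsub hsup hloclo hlochi hweak j h0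
    have hW := strictW hα hβ hsub hsup hweak j hQ j (Or.inl rfl)
    exact strict_all hα hβ hf hsub hsup hloclo hlochi hweak j hW
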